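/- With v_a = −2cpq/(a·D) + 1, v_b = −2cpq/(b·D) + 1, and S(a,b) = 2cpq/(ab·D), where D = pq+2c(mp+nq), the relation 1 + (p−a)S(a,b) − (p+b)S̃(a,b) = ṽ_a·v_b holds at all lattice points where D and its shift are nonzero. -/

import Mathlib

/-- Miura-type relation `1 + (p−a)S(a,b) − (p+b)S̃(a,b) = ṽ_a·v_b` for the N=2
rational solutions, where `D = pq + 2c(mp+nq)`. -/
theorem stmt_7 (p q c a b : ℝ) (hp : p ≠ 0) (hq : q ≠ 0) (hc : c ≠ 0)
    (ha : a ≠ 0) (hb : b ≠ 0)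
    (D : ℤ → ℤ → ℝ)
    (hD : ∀ n m : ℤ, D n m = p*q + 2*c*((m : ℝ)*p + (n : ℝ)*q))
    (va vb S : ℤ → ℤ → ℝ)
    (hva : ∀ n m : ℤ, va n m = -(2*c*p*q) / (a * D n m) + 1)
    (hvb : ∀ n m : ℤ, vb n m = -(2*c*p*q) / (b * D n m) + 1)
    (hS : ∀ n m : ℤ, S n m = 2*c*p*q / (a*b*D n m))
    (n m : ℤ) (h1 : D n m ≠ 0) (h2 : D (n+1) m ≠ 0) :
    1 + (p - a) * S n m - (p + b) * S (n+1) m = va (n+1) m * vb n m := by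
  have hDn := hD n m
  have hDn1 := hD (n+1) m
  rw [hva, hvb, hS, hS, hDn1, hDn]
  rw [hDn] at h1; rw [hDn1] at h2
  push_cast at *
  field_simp
  have h1' : p * q + 2 * c * (p * ↑m + q * ↑n) ≠ 0 := by
    intro h; apply h1; linear_combination h
  have h2' : p * q + 2 * c * (p * ↑m + q * (↑n + 1)) ≠ 0 := by
    intro h; apply h2; linear_combination h
  field_simp
  ring
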